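/- In the chord-space model, left and right operators satisfy: for all i, j ∈ {0,1}, a_{L,i} ∘ a_{R,j} = a_{R,j} ∘ a_{L,i}, a†_{L,i} ∘ a†_{R,j} = a†_{R,j} ∘ a†_{L,i}, and a_{L,i} ∘ a†_{R,j} − a†_{R,j} ∘ a_{L,i} = δ_{ij}·W_i (and likewise a_{R,i} ∘ a†_{L,j} − a†_{L,j} ∘ a_{R,i} = δ_{ij}·W_i), where W_i is the diagonal operator W_i δ_w = Q(0,i)^{N₀(w)}·Q(1,i)^{N₁(w)}·δ_w. -/

import Mathlib

namespace DSSYK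

/-- Binary strings (chord words); the letter `0` is `false`, the letter `1` is `true`. -/
abbrev Str : Type := List Bool

/-- The chord space: finitely supported complex functions on binary strings. -/
abbrev Sp : Type := Str →₀ ℂ

/-- Crossing weights: `Q 0 0 = q`, `Q 1 1 = q_m`, mixed crossings give `r`. -/
def Qmat (q qm r : ℝ) : Bool → Bool → ℂ
  | false, false => (q : ℂ)
  | true,  true  => (qm : ℂ)
  | _,     _     => (r : ℂ)

/-- Right creation `a†_{R,i}`: append the letter `i` on the right. -/
noncomputable def creR (i : Bool) : Sp →ₗ[ℂ] Sp :=
  Finsupp.lift Sp ℂ Str fun w => Finsupp.single (w ++ [i]) 1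

/-- Value of the right annihilation operator on a basis string: delete one letter
equal to `i`, weighted by the crossing factors with all letters to its right. -/
noncomputable def annVecR (Q : Bool → Bool → ℂ) (i : Bool) : Str → Sp
  | [] => 0
  | x :: t =>
      (if x = i then ((t.map (Q i)).prod) • Finsupp.single t (1 : ℂ) else 0)
        + Finsupp.mapDomain (List.cons x) (annVecR Q i t)

/-- Right annihilation `a_{R,i}`. -/
noncomputable def annR (Q : Bool → Bool → ℂ) (i : Bool) : Sp →ₗ[ℂ] Sp :=
  Finsupp.lift Sp ℂ Str (annVecR Q i)

/-- Left creation `a†_{L,i}`: prepend the letter `i`. -/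
noncomputable def creL (i : Bool) : Sp →ₗ[ℂ] Sp :=
  Finsupp.lift Sp ℂ Str fun w => Finsupp.single (i :: w) 1

/-- Value of the left annihilation operator on a basis string: delete one letter
equal to `i`, weighted by the crossing factors with all letters to its left. -/
noncomputable def annVecL (Q : Bool → Bool → ℂ) (i : Bool) : Str → Sp
  | [] => 0
  | x :: t =>
      (if x = i then Finsupp.single t (1 : ℂ) else 0)
        + Q i x • Finsupp.mapDomain (List.cons x) (annVecL Q i t)

/-- Left annihilation `a_{L,i}`. -/
noncomputable def annL (Q : Bool → Bool → ℂ) (i : Bool) : Sp →ₗ[ℂ] Sp :=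
  Finsupp.lift Sp ℂ Str (annVecL Q i)

/-- Diagonal weight operator `δ_w ↦ c₀^{N₀(w)} · c₁^{N₁(w)} · δ_w`, where `N₀, N₁`
count the `0`'s and `1`'s in `w`. -/
noncomputable def Wgen (c₀ c₁ : ℂ) : Sp →ₗ[ℂ] Sp :=
  Finsupp.lift Sp ℂ Str fun w =>
    Finsupp.single w (c₀ ^ (w.count false) * c₁ ^ (w.count true))

/-- The chord-counting weight operator `W δ_w = q^{N₀(w)} r^{N₁(w)} δ_w`. -/
noncomputable def Wop (q r : ℝ) : Sp →ₗ[ℂ] Sp := Wgen (q : ℂ) (r : ℂ)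

/-- Right boundary operators `H_{R,i} = a_{R,i} + a†_{R,i}`. -/
noncomputable def HR (Q : Bool → Bool → ℂ) (i : Bool) : Sp →ₗ[ℂ] Sp := annR Q i + creR i

/-- Left boundary operators `H_{L,i} = a_{L,i} + a†_{L,i}`. -/
noncomputable def HL (Q : Bool → Bool → ℂ) (i : Bool) : Sp →ₗ[ℂ] Sp := annL Q i + creL i

/-- The vacuum `ω = δ_{[]}` (the empty string). -/
noncomputable def vac : Sp := Finsupp.single [] 1

/-- `ε v = v([])`, the coefficient of the empty string. -/
def eps (v : Sp) : ℂ := v []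

end DSSYK

namespace DSSYK
open Finsupp

lemma lift_single (f : Str → Sp) (w : Str) (c : ℂ) :
    Finsupp.lift Sp ℂ Str f (single w c) = c • f w := by
  simp [Finsupp.lift_apply, Finsupp.sum_single_index]

lemma annL_single (Q : Bool → Bool → ℂ) (i : Bool) (w : Str) (c : ℂ) :
    annL Q i (single w c) = c • annVecL Q i w := lift_single _ _ _

lemma annR_single (Q : Bool → Bool → ℂ) (i : Bool) (w : Str) (c : ℂ) :
    annR Q i (single w c) = c • annVecR Q i w := lift_single _ _ _

lemma creL_apply (j : Bool) (v : Sp) : creL j v = v.mapDomain (List.cons j) := by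
  rw [Finsupp.mapDomain, creL, Finsupp.lift_apply]
  exact Finsupp.sum_congr fun a _ => by simp [Finsupp.smul_single]

lemma creR_apply (j : Bool) (v : Sp) : creR j v = v.mapDomain (· ++ [j]) := by
  rw [Finsupp.mapDomain, creR, Finsupp.lift_apply]
  exact Finsupp.sum_congr fun a _ => by simp [Finsupp.smul_single]

lemma Wgen_single (c0 c1 : ℂ) (w : Str) (c : ℂ) :
    Wgen c0 c1 (single w c) = (c0 ^ w.count false * c1 ^ w.count true * c) • single w 1 := by
  rw [Wgen, lift_single, Finsupp.smul_single, Finsupp.smul_single, smul_eq_mul, smul_eq_mul,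
    mul_one, mul_comm]

lemma map_prod_count (f : Bool → ℂ) (w : Str) :
    (w.map f).prod = f false ^ w.count false * f true ^ w.count true := by
  induction w with
  | nil => simp
  | cons x t ih => cases x <;> simp [ih, List.count_cons] <;> ring

end DSSYK
namespace DSSYK
open Finsupp

lemma Wgen_mapCons (c0 c1 : ℂ) (x : Bool) (v : Sp) :
    Wgen c0 c1 (v.mapDomain (List.cons x))
      = (if x then c1 else c0) • (Wgen c0 c1 v).mapDomain (List.cons x) := by
  induction v using Finsupp.induction_linear with
  | zero => simp
  | add f g hf hg => simp [Finsupp.mapDomain_add, hf, hg, smul_add]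
  | single a b =>
      rw [Finsupp.mapDomain_single, Wgen_single, Wgen_single, Finsupp.mapDomain_smul,
        Finsupp.mapDomain_single, smul_smul]
      cases x <;>
        · simp only [List.count_cons, if_true, if_false, cond]
          congr 1
          simp only [beq_self_eq_true, reduceIte, pow_one, beq_iff_eq,
            pow_zero, reduceCtorEq, Bool.false_eq_true, Bool.true_eq_false]
          ring

lemma annL_mapCons (Q : Bool → Bool → ℂ) (i x : Bool) (v : Sp) :
    annL Q i (v.mapDomain (List.cons x))
      = (if x = i then v else 0) + Q i x • (annL Q i v).mapDomain (List.cons x) := by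
  induction v using Finsupp.induction_linear with
  | zero => simp
  | add f g hf hg =>
      simp only [Finsupp.mapDomain_add, map_add, hf, hg, smul_add]
      by_cases h : x = i <;> simp [h] <;> abel
  | single a b =>
      rw [Finsupp.mapDomain_single, annL_single, annVecL]
      rw [annL_single, smul_add]
      by_cases h : x = i <;>
        simp [h, Finsupp.smul_single, Finsupp.mapDomain_smul, smul_comm b]

lemma annR_mapCons (Q : Bool → Bool → ℂ) (j x : Bool) (v : Sp) :
    annR Q j (v.mapDomain (List.cons x))
      = (if x = j then Wgen (Q j false) (Q j true) v else 0)
        + (annR Q j v).mapDomain (List.cons x) := by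
  induction v using Finsupp.induction_linear with
  | zero => simp
  | add f g hf hg =>
      simp only [Finsupp.mapDomain_add, map_add, hf, hg]
      by_cases h : x = j <;> simp [h] <;> abel
  | single a b =>
      rw [Finsupp.mapDomain_single, annR_single, annVecR]
      rw [annR_single, smul_add, Wgen_single, map_prod_count]
      by_cases h : x = j <;>
        · simp only [h, if_true, if_false, reduceIte, smul_add, Finsupp.mapDomain_smul,
            Wgen_single, map_prod_count, smul_smul, Finsupp.smul_single, smul_eq_mul, mul_one,
            zero_add, add_left_cancel_iff, zero_smul, smul_zero]
          try rw [mul_comm b]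
          try rw [Finsupp.single_left_inj] <;> first | ring | simp
          try rfl

end DSSYK
namespace DSSYK
open Finsupp

lemma Qmat_symm (q qm r : ℝ) (a b : Bool) : Qmat q qm r a b = Qmat q qm r b a := by
  cases a <;> cases b <;> rfl

lemma md_comm (x j : Bool) (v : Sp) :
    Finsupp.mapDomain (List.cons x) (v.mapDomain (· ++ [j]))
      = Finsupp.mapDomain (· ++ [j]) (v.mapDomain (List.cons x)) := by
  rw [← Finsupp.mapDomain_comp, ← Finsupp.mapDomain_comp]
  rfl

lemma annVecL_append (Q : Bool → Bool → ℂ) (i j : Bool) (w : Str) :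
    annVecL Q i (w ++ [j]) = (annVecL Q i w).mapDomain (· ++ [j])
      + (if j = i then ((w.map (Q i)).prod) • Finsupp.single w (1:ℂ) else 0) := by
  induction w with
  | nil => by_cases h : j = i <;> simp [annVecL, h, Finsupp.mapDomain_single]
  | cons x s ih =>
      show annVecL Q i (x :: (s ++ [j])) = _
      show annVecL Q i (x :: (s ++ [j])) = _
      rw [annVecL, ih, annVecL]
      by_cases h : j = i <;> by_cases hx : x = i <;>
        simp only [h, hx, if_true, if_false, reduceIte, Finsupp.mapDomain_add, smul_add,
          Finsupp.mapDomain_smul, Finsupp.mapDomain_single, Finsupp.mapDomain_zero,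
          List.map_cons, List.prod_cons, md_comm, smul_zero, add_zero, zero_add, smul_smul] <;>
        abel

lemma WannL (Q : Bool → Bool → ℂ) (hQ : ∀ a b, Q a b = Q b a) (i j : Bool) (t : Str) :
    Q i j • Wgen (Q j false) (Q j true) (annVecL Q i t)
      = ((t.map (Q j)).prod) • annVecL Q i t := by
  induction t with
  | nil => simp [annVecL]
  | cons x s ih =>
      rw [annVecL, List.map_cons, List.prod_cons]
      simp only [map_add, smul_add]
      congr 1
      · by_cases h : x = i
        · subst h
          have e : (if x = x then (Finsupp.single s (1:ℂ)) else 0) = Finsupp.single s 1 :=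
            if_pos rfl
          rw [e, Wgen_single, map_prod_count (Q j) s, smul_smul, mul_one]
          congr 1
          rw [hQ x j]
        · simp [h]
      · rw [map_smul, Wgen_mapCons, smul_smul, smul_smul,
          show Q i j * Q i x * (if x then Q j true else Q j false)
            = (Q i x * (if x then Q j true else Q j false)) * Q i j by ring,
          ← smul_smul, ← Finsupp.mapDomain_smul, ih, Finsupp.mapDomain_smul,
          smul_smul, smul_smul]
        congr 1
        cases x <;> simp only [Bool.false_eq_true, reduceIte, if_true] <;> ring
end DSSYK

namespace DSSYK
open Finsupp

lemma comm_aux (Q : Bool → Bool → ℂ) (hQ : ∀ a b, Q a b = Q b a) (i j : Bool) (w : Str) :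
    annL Q i (annVecR Q j w) = annR Q j (annVecL Q i w) := by
  induction w with
  | nil => simp [annVecR, annVecL]
  | cons x t ih =>
      rw [annVecR, annVecL, map_add, map_add, annL_mapCons, map_smul, annR_mapCons, ih]
      have hA : annL Q i (if x = j then ((t.map (Q j)).prod) • Finsupp.single t (1:ℂ) else 0)
          = Q i x • (if x = j then Wgen (Q j false) (Q j true) (annVecL Q i t) else 0) := by
        by_cases h : x = j
        · subst h
          have e1 : (if x = x then ((t.map (Q x)).prod) • Finsupp.single t (1:ℂ) else 0)
              = ((t.map (Q x)).prod) • Finsupp.single t (1:ℂ) := if_pos rfl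
          have e2 : (if x = x then Wgen (Q x false) (Q x true) (annVecL Q i t) else 0)
              = Wgen (Q x false) (Q x true) (annVecL Q i t) := if_pos rfl
          rw [e1, e2, map_smul, annL_single, one_smul, ← WannL Q hQ i x t]
        · simp [h]
      have hB : annR Q j (if x = i then Finsupp.single t (1:ℂ) else 0)
          = (if x = i then annVecR Q j t else 0) := by
        by_cases hx : x = i <;> simp [hx, annR_single]
      rw [hA, smul_add, hB]
      abel

lemma Wgen_Qmat_single (q qm r : ℝ) (i : Bool) (w : Str) :
    Wgen (Qmat q qm r false i) (Qmat q qm r true i) (Finsupp.single w (1:ℂ))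
      = ((w.map (Qmat q qm r i)).prod) • Finsupp.single w 1 := by
  rw [Wgen_single, mul_one, map_prod_count, Qmat_symm q qm r i false, Qmat_symm q qm r i true]

end DSSYK

open DSSYK in
/-- mutual (q-)commutation relations between left and right chord operators:
`[a_{L,i}, a_{R,j}] = 0`, `[a†_{L,i}, a†_{R,j}] = 0`, and
`[a_{L,i}, a†_{R,j}] = δ_{ij}·W_i = [a_{R,i}, a†_{L,j}]`, where
`W_i δ_w = Q(0,i)^{N₀(w)} Q(1,i)^{N₁(w)} δ_w`. -/
theorem stmt_5 (q qm r : ℝ) (i j : Bool) :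
    (annL (Qmat q qm r) i ∘ₗ annR (Qmat q qm r) j
      = annR (Qmat q qm r) j ∘ₗ annL (Qmat q qm r) i) ∧
    (creL i ∘ₗ creR j = creR j ∘ₗ creL i) ∧
    (annL (Qmat q qm r) i ∘ₗ creR j - creR j ∘ₗ annL (Qmat q qm r) i
      = if i = j then Wgen (Qmat q qm r false i) (Qmat q qm r true i) else 0) ∧
    (annR (Qmat q qm r) i ∘ₗ creL j - creL j ∘ₗ annR (Qmat q qm r) i
      = if i = j then Wgen (Qmat q qm r false i) (Qmat q qm r true i) else 0) := by
  have hQ : ∀ a b, Qmat q qm r a b = Qmat q qm r b a := Qmat_symm q qm r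
  have ext1 : ∀ (f g : Sp →ₗ[ℂ] Sp), (∀ w, f (Finsupp.single w 1) = g (Finsupp.single w 1))
      → f = g := by
    intro f g h
    refine Finsupp.lhom_ext fun a b => ?_
    have e : (Finsupp.single a b : Sp) = b • Finsupp.single a 1 := by
      rw [Finsupp.smul_single, smul_eq_mul, mul_one]
    rw [e, map_smul, map_smul, h a]
  refine ⟨?_, ?_, ?_, ?_⟩
  · refine ext1 _ _ fun w => ?_
    simp only [LinearMap.comp_apply, annL_single, annR_single, one_smul]
    exact comm_aux _ hQ i j w
  · refine ext1 _ _ fun w => ?_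
    simp [creL, creR, lift_single]
  · refine ext1 _ _ fun w => ?_
    simp only [LinearMap.sub_apply, LinearMap.comp_apply]
    by_cases h : i = j <;> [rw [if_pos h]; rw [if_neg h]]
    all_goals rw [creR_apply, Finsupp.mapDomain_single, annL_single, one_smul, annL_single, one_smul,
      creR_apply, annVecL_append]
    case pos =>
      subst h
      have e : (if i = i then ((w.map (Qmat q qm r i)).prod) • Finsupp.single w (1:ℂ) else 0)
          = ((w.map (Qmat q qm r i)).prod) • Finsupp.single w 1 := if_pos rfl
      rw [e, Wgen_Qmat_single]
      abel
    case neg =>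
      rw [if_neg (fun hh => h hh.symm)]
      simp
  · refine ext1 _ _ fun w => ?_
    simp only [LinearMap.sub_apply, LinearMap.comp_apply]
    by_cases h : i = j <;> [rw [if_pos h]; rw [if_neg h]]
    all_goals rw [creL_apply, Finsupp.mapDomain_single, annR_single, one_smul, annR_single, one_smul,
      creL_apply, annVecR]
    case pos =>
      subst h
      have e : (if i = i then ((w.map (Qmat q qm r i)).prod) • Finsupp.single w (1:ℂ) else 0)
          = ((w.map (Qmat q qm r i)).prod) • Finsupp.single w 1 := if_pos rfl
      rw [e, Wgen_Qmat_single]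
      abel
    case neg =>
      rw [if_neg (fun hh => h hh.symm)]
      simp
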